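/- arXiv:1809.01249 — 4 statements merged into one kernel-verified Lean document; each statement's English description precedes it below -/
import Mathlib

section
/- Let G be a connected, bipartite (2-colorable), d-regular simple graph on M vertices with d > 0, and let A be its adjacency matrix. Then for every integer j ≥ 1, every marked vertex w : Fin j → Fin M, every jumping rate γ ∈ ℝ, and every time t ∈ ℝ, the success probability satisfies p_{A,j,γ,w}(t) ≤ 1 / 2^{j-1}. -/
open Matrix

/-- The j-th Kronecker power of an M×M matrix, indexed by functions `Fin j → Fin M`. -/
noncomputable def kronPow {M : ℕ} (A : Matrix (Fin M) (Fin M) ℝ) (j : ℕ) :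
    Matrix (Fin j → Fin M) (Fin j → Fin M) ℝ :=
  Matrix.of fun x y => ∏ i, A (x i) (y i)

/-- The search Hamiltonian `H = γ·A^{⊗j} + |w⟩⟨w|` as a complex matrix. -/
noncomputable def searchHam {M : ℕ} (A : Matrix (Fin M) (Fin M) ℝ) (j : ℕ)
    (γ : ℝ) (w : Fin j → Fin M) : Matrix (Fin j → Fin M) (Fin j → Fin M) ℂ :=
  (γ : ℂ) • (kronPow A j).map (fun r : ℝ => (r : ℂ)) + Matrix.single w w 1

/-- The uniform initial state with all `M^j` entries equal to `1/√(M^j)`. -/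
noncomputable def uniformState (M j : ℕ) : (Fin j → Fin M) → ℂ :=
  fun _ => ((1 / Real.sqrt ((M : ℝ) ^ j) : ℝ) : ℂ)

/-- The success probability `|ψ(t)_w|²` where `ψ(t) = exp(-i·t·H)·s`. -/
noncomputable def successProb {M : ℕ} (A : Matrix (Fin M) (Fin M) ℝ) (j : ℕ)
    (γ : ℝ) (w : Fin j → Fin M) (t : ℝ) : ℝ :=
  ‖(((NormedSpace.exp
      ((-(Complex.I * (t : ℂ))) • searchHam A j γ w)).mulVec (uniformState M j)) w)‖ ^ 2

section AuxLemmas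


section Aux

variable {n : Type*} [Fintype n] [DecidableEq n]

lemma matPow_support {R : n → n → Prop} (hrefl : ∀ x, R x x)
    (htrans : ∀ {x y z}, R x y → R y z → R x z)
    {B : Matrix n n ℂ} (hB : ∀ x y, ¬ R x y → B x y = 0) :
    ∀ (k : ℕ) x y, ¬ R x y → (B ^ k) x y = 0 := by
  intro k
  induction k with
  | zero =>
    intro x y h
    have hxy : x ≠ y := fun he => h (he ▸ hrefl x)
    simp [Matrix.one_apply, hxy]
  | succ k ih =>
    intro x y h
    rw [pow_succ, Matrix.mul_apply]
    refine Finset.sum_eq_zero fun z _ => ?_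
    by_cases hz : R x z
    · rw [hB z y (fun h2 => h (htrans hz h2)), mul_zero]
    · rw [ih x z hz, zero_mul]

lemma matExp_support {R : n → n → Prop} (hrefl : ∀ x, R x x)
    (htrans : ∀ {x y z}, R x y → R y z → R x z)
    {B : Matrix n n ℂ} (hB : ∀ x y, ¬ R x y → B x y = 0) :
    ∀ x y, ¬ R x y → (NormedSpace.exp B) x y = 0 := by
  intro x y h
  letI : SeminormedRing (Matrix n n ℂ) := Matrix.linftyOpSemiNormedRing
  letI : NormedRing (Matrix n n ℂ) := Matrix.linftyOpNormedRing
  letI : NormedAlgebra ℂ (Matrix n n ℂ) := Matrix.linftyOpNormedAlgebra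
  have hsum : Summable (fun k : ℕ => ((Nat.factorial k : ℂ))⁻¹ • B ^ k) :=
    NormedSpace.expSeries_summable' (𝕂 := ℂ) B
  have h2 : HasSum (fun k : ℕ => ((Nat.factorial k : ℂ))⁻¹ • B ^ k) (NormedSpace.exp B) := by
    rw [NormedSpace.exp_eq_tsum (𝕂 := ℂ)]; exact hsum.hasSum
  have φcont : Continuous (fun X : Matrix n n ℂ => X x y) :=
    Continuous.matrix_elem continuous_id x y
  have h3 : HasSum (fun k : ℕ => (((Nat.factorial k : ℂ))⁻¹ • B ^ k) x y)
      ((NormedSpace.exp B) x y) :=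
    h2.map (AddMonoidHom.mk' (fun X : Matrix n n ℂ => X x y) (fun _ _ => rfl)) φcont
  have h4 : (fun k : ℕ => (((Nat.factorial k : ℂ))⁻¹ • B ^ k) x y) = fun _ => (0 : ℂ) := by
    funext k
    simp [Matrix.smul_apply, matPow_support hrefl @htrans hB k x y h]
  rw [h4] at h3
  exact h3.unique hasSum_zero

lemma matExp_row_sum_sq {H : Matrix n n ℂ} (hH : H.IsHermitian) (t : ℝ) (x : n) :
    ∑ y, ‖(NormedSpace.exp ((-(Complex.I * (t : ℂ))) • H)) x y‖ ^ 2 = 1 := by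
  set B := (-(Complex.I * (t : ℂ))) • H with hBdef
  have hBH : Bᴴ = -B := by
    rw [hBdef, Matrix.conjTranspose_smul, hH.eq]
    rw [show star (-(Complex.I * (t : ℂ))) = Complex.I * (t : ℂ) by
      simp [Complex.ext_iff]]
    module
  have hU : NormedSpace.exp B * (NormedSpace.exp B)ᴴ = 1 := by
    rw [← Matrix.exp_conjTranspose, hBH,
      ← Matrix.exp_add_of_commute B (-B) (Commute.neg_right (Commute.refl B)),
      add_neg_cancel]
    letI : SeminormedRing (Matrix n n ℂ) := Matrix.linftyOpSemiNormedRing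
    letI : NormedRing (Matrix n n ℂ) := Matrix.linftyOpNormedRing
    letI : NormedAlgebra ℂ (Matrix n n ℂ) := Matrix.linftyOpNormedAlgebra
    exact NormedSpace.exp_zero
  have h1 : (NormedSpace.exp B * (NormedSpace.exp B)ᴴ) x x = 1 := by
    rw [hU, Matrix.one_apply_eq]
  rw [Matrix.mul_apply] at h1
  simp only [Matrix.conjTranspose_apply, RCLike.star_def, Complex.mul_conj] at h1
  have h2 : ((∑ y, ‖(NormedSpace.exp B) x y‖ ^ 2 : ℝ) : ℂ) = ((1 : ℝ) : ℂ) := by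
    push_cast
    rw [← h1]
    congr 1
    funext y
    rw [← Complex.sq_norm]; push_cast; ring
  exact_mod_cast h2

end Aux

lemma parts_card_eq {M d : ℕ} (G : SimpleGraph (Fin M)) [DecidableRel G.Adj]
    (c : G.Coloring (Fin 2)) (hreg : G.IsRegularOfDegree d) (hd : 0 < d) :
    (Finset.univ.filter (fun v => c v = (1 : Fin 2))).card
      = (Finset.univ.filter (fun v => c v = (0 : Fin 2))).card := by
  classical
  have hdeg : ∀ u, (∑ v, if G.Adj u v then 1 else 0) = d := by
    intro u
    rw [← Finset.card_filter]
    rw [← SimpleGraph.neighborFinset_eq_filter]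
    exact hreg u
  have key : ∀ u v, (G.Adj u v ∧ c u = 0) = (G.Adj u v ∧ c v = 1) := by
    intro u v
    by_cases h : G.Adj u v
    · have hne := c.valid h
      have hfact : ∀ a b : Fin 2, a ≠ b → ((a = 0) ↔ (b = 1)) := by decide
      exact propext (and_congr_right fun _ => hfact _ _ hne)
    · simp [h]
  have lhs : ∀ v, (∑ u, if G.Adj u v ∧ c v = 1 then 1 else 0) = if c v = 1 then d else 0 := by
    intro v
    by_cases hc : c v = 1
    · simp only [hc, and_true, if_true]
      rw [← hdeg v]
      exact Finset.sum_congr rfl fun u _ => if_congr (G.adj_comm u v) rfl rfl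
    · simp [hc]
  have rhs : ∀ u, (∑ v, if G.Adj u v ∧ c u = 0 then 1 else 0) = if c u = 0 then d else 0 := by
    intro u
    by_cases hc : c u = 0
    · simp only [hc, and_true, if_true]
      exact hdeg u
    · simp [hc]
  have hN : (Finset.univ.filter (fun v => c v = (1 : Fin 2))).card * d
      = (Finset.univ.filter (fun v => c v = (0 : Fin 2))).card * d := by
    calc (Finset.univ.filter (fun v => c v = (1 : Fin 2))).card * d
        = ∑ v, if c v = (1 : Fin 2) then d else 0 := by
          rw [← Finset.sum_filter, Finset.sum_const, smul_eq_mul]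
      _ = ∑ v, ∑ u, if G.Adj u v ∧ c v = 1 then 1 else 0 := by
          exact Finset.sum_congr rfl fun v _ => (lhs v).symm
      _ = ∑ u, ∑ v, if G.Adj u v ∧ c v = 1 then 1 else 0 := Finset.sum_comm
      _ = ∑ u, ∑ v, if G.Adj u v ∧ c u = 0 then 1 else 0 := by
          exact Finset.sum_congr rfl fun u _ => Finset.sum_congr rfl fun v _ =>
            if_congr (iff_of_eq (key u v).symm) rfl rfl
      _ = ∑ u, if c u = (0 : Fin 2) then d else 0 := Finset.sum_congr rfl fun u _ => rhs u
      _ = (Finset.univ.filter (fun v => c v = (0 : Fin 2))).card * d := by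
          rw [← Finset.sum_filter, Finset.sum_const, smul_eq_mul]
  exact Nat.eq_of_mul_eq_mul_right hd hN

lemma card_pattern {M j : ℕ} (c : Fin M → Fin 2) (q : Fin j → Fin 2) :
    (Finset.univ.filter (fun y : Fin j → Fin M => ∀ i, c (y i) = q i)).card
      = ∏ i, (Finset.univ.filter (fun v => c v = q i)).card := by
  classical
  rw [← Fintype.card_subtype]
  rw [Fintype.card_congr (Equiv.subtypePiEquivPi (p := fun i (v : Fin M) => c v = q i))]
  rw [Fintype.card_pi]
  exact Finset.prod_congr rfl fun i _ => Fintype.card_subtype _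

end AuxLemmas

/-- For a connected, regular, bipartite initiator, the success probability of quantum
search on the `j`-th Kronecker power never exceeds `1/2^{j-1}`. -/
theorem bipartite_initiator_success_prob_bound
    {M d : ℕ} (G : SimpleGraph (Fin M)) [DecidableRel G.Adj]
    (hconn : G.Connected) (hbip : G.Colorable 2)
    (hreg : G.IsRegularOfDegree d) (hd : 0 < d) :
    ∀ j : ℕ, 1 ≤ j → ∀ (w : Fin j → Fin M) (γ t : ℝ),
      successProb (G.adjMatrix ℝ) j γ w t ≤ 1 / 2 ^ (j - 1) := by
  classical
  intro j hj w γ t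
  obtain ⟨k, rfl⟩ : ∃ k, j = k + 1 := ⟨j - 1, (Nat.succ_pred_eq_of_pos hj).symm⟩
  obtain ⟨c⟩ := hbip
  have hMpos : 0 < M := by
    have := Fintype.card_pos_iff.mpr hconn.nonempty
    simpa using this
  set m0 := (Finset.univ.filter (fun v : Fin M => c v = (0 : Fin 2))).card with hm0def
  have hpartb : ∀ b : Fin 2, (Finset.univ.filter (fun v : Fin M => c v = b)).card = m0 := by
    intro b
    fin_cases b
    · rfl
    · exact parts_card_eq G c hreg hd
  have hMsum : M = m0 + m0 := by
    have h := Finset.card_filter_add_card_filter_not (s := (Finset.univ : Finset (Fin M)))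
      (p := fun v => c v = (0 : Fin 2))
    have h2 : Finset.univ.filter (fun v : Fin M => ¬ c v = 0) =
        Finset.univ.filter (fun v : Fin M => c v = 1) := by
      apply Finset.filter_congr
      intro v _
      have hf : ∀ a : Fin 2, (¬ a = 0) ↔ a = 1 := by decide
      simp [hf]
    rw [h2, hpartb 1, Finset.card_univ, Fintype.card_fin] at h
    omega
  have hm0pos : 0 < m0 := by omega
  set R : (Fin (k+1) → Fin M) → (Fin (k+1) → Fin M) → Prop :=
    fun x y => (∀ i, c (x i) = c (y i)) ∨ (∀ i, c (x i) ≠ c (y i)) with hRdef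
  have hrefl : ∀ x, R x x := fun x => Or.inl fun i => rfl
  have htrans : ∀ {x y z}, R x y → R y z → R x z := by
    intro x y z h1 h2
    have fact : ∀ a b e : Fin 2, a ≠ b → b ≠ e → a = e := by decide
    rcases h1 with h1 | h1 <;> rcases h2 with h2 | h2
    · exact Or.inl fun i => (h1 i).trans (h2 i)
    · exact Or.inr fun i => (h1 i) ▸ h2 i
    · exact Or.inr fun i => (h2 i) ▸ h1 i
    · exact Or.inl fun i => fact _ _ _ (h1 i) (h2 i)
  have hsupp : ∀ x y, ¬ R x y → searchHam (G.adjMatrix ℝ) (k+1) γ w x y = 0 := by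
    intro x y h
    have hxy : x ≠ y := fun he => h (he ▸ hrefl x)
    have hK : kronPow (G.adjMatrix ℝ) (k+1) x y = 0 := by
      by_contra hne
      refine h (Or.inr fun i => ?_)
      have hfac : G.adjMatrix ℝ (x i) (y i) ≠ 0 := by
        intro h0
        exact hne (by
          unfold kronPow
          simp only [Matrix.of_apply]
          exact Finset.prod_eq_zero (Finset.mem_univ i) h0)
      have hadj : G.Adj (x i) (y i) := by
        by_contra hna
        exact hfac (by simp [SimpleGraph.adjMatrix_apply, hna])
      exact c.valid hadj
    have hstd : Matrix.single w w (1 : ℂ) x y = 0 :=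
      Matrix.single_apply_of_ne _ _ _ _ _ (fun hc => hxy (hc.1.symm.trans hc.2))
    unfold searchHam
    simp [Matrix.add_apply, Matrix.smul_apply, Matrix.map_apply, hK, hstd]
  have hHerm : (searchHam (G.adjMatrix ℝ) (k+1) γ w).IsHermitian := by
    have hsym : ∀ x y : Fin (k+1) → Fin M,
        kronPow (G.adjMatrix ℝ) (k+1) x y = kronPow (G.adjMatrix ℝ) (k+1) y x := by
      intro x y
      unfold kronPow
      simp only [Matrix.of_apply]
      exact Finset.prod_congr rfl fun i _ => by
        rw [SimpleGraph.adjMatrix_apply, SimpleGraph.adjMatrix_apply]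
        exact if_congr (G.adj_comm _ _) rfl rfl
    unfold Matrix.IsHermitian
    ext x y
    simp only [searchHam, Matrix.conjTranspose_apply, Matrix.add_apply, Matrix.smul_apply,
      Matrix.map_apply, smul_eq_mul, star_add, star_mul', Complex.star_def, Complex.conj_ofReal,
      Matrix.single, Matrix.of_apply, apply_ite (starRingEnd ℂ), _root_.map_one,
      _root_.map_zero]
    rw [hsym y x]
    congr 1
    exact if_congr (by tauto) rfl rfl
  set U := NormedSpace.exp ((-(Complex.I * (t : ℂ))) • searchHam (G.adjMatrix ℝ) (k+1) γ w)
    with hUdef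
  have hUsupp : ∀ y, ¬ R w y → U w y = 0 := by
    intro y hy
    refine matExp_support hrefl @htrans ?_ w y hy
    intro x y' h
    rw [Matrix.smul_apply, hsupp x y' h, smul_zero]
  have hrow : ∑ y, ‖U w y‖ ^ 2 = 1 := matExp_row_sum_sq hHerm t w
  set S := Finset.univ.filter (fun y => R w y) with hSdef
  set r : ℝ := 1 / Real.sqrt ((M : ℝ) ^ (k+1)) with hrdef
  have hr0 : 0 ≤ r := by positivity
  have hval : successProb (G.adjMatrix ℝ) (k+1) γ w t
      = ‖∑ y ∈ S, U w y * uniformState M (k+1) y‖ ^ 2 := by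
    unfold successProb
    rw [← hUdef]
    congr 2
    simp only [Matrix.mulVec, dotProduct]
    exact (Finset.sum_subset (Finset.subset_univ S) (fun y _ hy => by
      rw [hUsupp y (fun hr => hy (Finset.mem_filter.mpr ⟨Finset.mem_univ _, hr⟩)),
        zero_mul])).symm
  have habs : ‖∑ y ∈ S, U w y * uniformState M (k+1) y‖
      ≤ ∑ y ∈ S, ‖U w y‖ * r := by
    refine (norm_sum_le _ _).trans (le_of_eq (Finset.sum_congr rfl fun y _ => ?_))
    rw [norm_mul]
    congr 1
    unfold uniformState
    rw [Complex.norm_real, Real.norm_of_nonneg hr0]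
  have hCS := Finset.sum_mul_sq_le_sq_mul_sq S (fun y => ‖U w y‖) (fun _ => r)
  have h1 : ∑ y ∈ S, ‖U w y‖ ^ 2 ≤ 1 := by
    rw [← hrow]
    exact Finset.sum_le_sum_of_subset_of_nonneg (Finset.subset_univ S)
      (fun y _ _ => by positivity)
  have hcard : S.card ≤ 2 * m0 ^ (k+1) := by
    set q1 : Fin (k+1) → Fin 2 := fun i => c (w i) with hq1
    set q2 : Fin (k+1) → Fin 2 := fun i => if c (w i) = 0 then 1 else 0 with hq2
    have hsub : S ⊆ Finset.univ.filter (fun y : Fin (k+1) → Fin M => ∀ i, c (y i) = q1 i)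
        ∪ Finset.univ.filter (fun y : Fin (k+1) → Fin M => ∀ i, c (y i) = q2 i) := by
      intro y hy
      rcases (Finset.mem_filter.mp hy).2 with h | h
      · exact Finset.mem_union_left _
          (Finset.mem_filter.mpr ⟨Finset.mem_univ _, fun i => (h i).symm⟩)
      · refine Finset.mem_union_right _
          (Finset.mem_filter.mpr ⟨Finset.mem_univ _, fun i => ?_⟩)
        have fact : ∀ a b : Fin 2, a ≠ b → b = if a = 0 then 1 else 0 := by decide
        exact fact _ _ (h i)
    calc S.card ≤ _ := Finset.card_le_card hsub
      _ ≤ _ + _ := Finset.card_union_le _ _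
      _ = 2 * m0 ^ (k+1) := by
        rw [card_pattern c q1, card_pattern c q2]
        simp only [hpartb]
        rw [Finset.prod_const, Finset.card_univ, Fintype.card_fin]
        ring
  have hrsq : r ^ 2 = 1 / (M : ℝ) ^ (k+1) := by
    rw [hrdef, div_pow, one_pow, Real.sq_sqrt (by positivity)]
  have hMr : (M : ℝ) = 2 * (m0 : ℝ) := by
    rw [hMsum]; push_cast; ring
  have hm0r : (0 : ℝ) < (m0 : ℝ) := by exact_mod_cast hm0pos
  calc successProb (G.adjMatrix ℝ) (k+1) γ w t
      = ‖∑ y ∈ S, U w y * uniformState M (k+1) y‖ ^ 2 := hval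
    _ ≤ (∑ y ∈ S, ‖U w y‖ * r) ^ 2 :=
        pow_le_pow_left₀ (norm_nonneg _) habs 2
    _ ≤ (∑ y ∈ S, ‖U w y‖ ^ 2) * (∑ _y ∈ S, r ^ 2) := hCS
    _ = (∑ y ∈ S, ‖U w y‖ ^ 2) * ((S.card : ℝ) * r ^ 2) := by
        rw [Finset.sum_const, nsmul_eq_mul]
    _ ≤ 1 * (((2 * m0 ^ (k+1) : ℕ) : ℝ) * r ^ 2) := by
        apply mul_le_mul h1 ?_ ?_ zero_le_one
        · exact mul_le_mul_of_nonneg_right (by exact_mod_cast hcard) (by positivity)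
        · positivity
    _ = 1 / 2 ^ (k + 1 - 1) := by
        rw [hrsq, hMr, Nat.add_sub_cancel]
        have h2m : ((2 * m0 ^ (k+1) : ℕ) : ℝ) = 2 * ((m0:ℝ)) ^ (k+1) := by push_cast; ring
        rw [h2m]
        have key : ∀ a : ℝ, 0 < a → 1 * (2 * a ^ (k+1) * (1 / (2*a) ^ (k+1))) = 1 / 2 ^ k := by
          intro a ha
          have ha' : a ≠ 0 := ne_of_gt ha
          rw [mul_pow]
          field_simp
          ring
        exact key (m0:ℝ) hm0r
end

section
/- Let A be a symmetric M×M real matrix with an eigenvalue λ₁ > 0, and suppose there is a constant c with 0 ≤ c < λ₁ such that every eigenvalue μ of A with μ ≠ λ₁ satisfies |μ| ≤ c. Then for every integer j ≥ 1, every eigenvalue μ' of the j-th Kronecker power A^{⊗j} with μ' ≠ λ₁^j satisfies |μ'| ≤ c·λ₁^{j-1}. -/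
open Matrix

/-- If the principal eigenvalue `λ₁ > 0` of a symmetric matrix dominates all other
eigenvalues in magnitude by a bound `c`, then every non-principal eigenvalue of the
Kronecker power `A^{⊗j}` is bounded in magnitude by `c·λ₁^{j-1}`. -/
theorem kronPow_nonprincipal_eigenvalue_bound {M : ℕ}
    (A : Matrix (Fin M) (Fin M) ℝ) (hA : A.IsSymm)
    (lam₁ : ℝ) (hpos : 0 < lam₁)
    (hprin : ∃ v : Fin M → ℝ, v ≠ 0 ∧ A.mulVec v = lam₁ • v)
    (c : ℝ) (hc0 : 0 ≤ c) (hc : c < lam₁)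
    (hgap : ∀ (μ : ℝ) (v : Fin M → ℝ), v ≠ 0 → A.mulVec v = μ • v → μ ≠ lam₁ → |μ| ≤ c)
    (j : ℕ) (hj : 1 ≤ j) (μ' : ℝ) (u : (Fin j → Fin M) → ℝ) (hu : u ≠ 0)
    (hμ' : (kronPow A j).mulVec u = μ' • u) (hne : μ' ≠ lam₁ ^ j) :
    |μ'| ≤ c * lam₁ ^ (j - 1) := by
  classical
  -- dispose of the degenerate case M = 0
  rcases Nat.eq_zero_or_pos M with hM | hM
  · subst hM
    exact absurd (funext fun x => (x ⟨0, hj⟩).elim0) hu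
  haveI : Nonempty (Fin M) := ⟨⟨0, hM⟩⟩
  -- A is Hermitian
  have hH : A.IsHermitian := by
    rw [Matrix.IsHermitian]
    ext i k
    simp [Matrix.conjTranspose_apply, hA.apply]
  set e : Fin M → ℝ := hH.eigenvalues with he
  set v : Fin M → (Fin M → ℝ) := fun k => ⇑(hH.eigenvectorBasis k) with hv
  have hAv : ∀ k, A.mulVec (v k) = e k • v k := fun k => hH.mulVec_eigenvectorBasis k
  -- orthonormality of the eigenvectors, as plain dot products
  have horth : ∀ k l, (∑ x, v k x * v l x) = if k = l then 1 else 0 := by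
    intro k l
    have h := hH.eigenvectorBasis.orthonormal
    rw [orthonormal_iff_ite] at h
    have := h k l
    rw [PiLp.inner_apply] at this
    rw [← this]
    exact Finset.sum_congr rfl fun x _ => by simp [hv, mul_comm]
  -- the candidate eigenvectors of the Kronecker power
  set w : (Fin j → Fin M) → ((Fin j → Fin M) → ℝ) :=
    fun f x => ∏ i, v (f i) (x i) with hw
  -- eigenvalue equation for the w's
  have hwe : ∀ f, (kronPow A j).mulVec (w f) = (∏ i, e (f i)) • w f := by
    intro f
    funext x
    simp only [Matrix.mulVec, dotProduct, kronPow, Matrix.of_apply,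
      Pi.smul_apply, smul_eq_mul, hw]
    calc ∑ y : Fin j → Fin M, (∏ i, A (x i) (y i)) * ∏ i, v (f i) (y i)
        = ∑ y : Fin j → Fin M, ∏ i, (A (x i) (y i) * v (f i) (y i)) := by
          exact Finset.sum_congr rfl fun y _ => (Finset.prod_mul_distrib).symm
      _ = ∏ i, ∑ k, A (x i) k * v (f i) k := by
          rw [Finset.prod_univ_sum, Fintype.piFinset_univ]
      _ = ∏ i, (e (f i) * v (f i) (x i)) := by
          refine Finset.prod_congr rfl fun i _ => ?_
          have h1 : A.mulVec (v (f i)) (x i) = (e (f i) • v (f i)) (x i) := by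
            rw [hAv]
          simpa [Matrix.mulVec, dotProduct] using h1
      _ = (∏ i, e (f i)) * ∏ i, v (f i) (x i) := Finset.prod_mul_distrib
  -- orthonormality of the w's
  have hworth : ∀ f g, (∑ x, w f x * w g x) = if f = g then 1 else 0 := by
    intro f g
    calc ∑ x, w f x * w g x
        = ∑ x : Fin j → Fin M, ∏ i, (v (f i) (x i) * v (g i) (x i)) :=
          Finset.sum_congr rfl fun x _ => (Finset.prod_mul_distrib).symm
      _ = ∏ i, ∑ k, v (f i) k * v (g i) k := by
          rw [Finset.prod_univ_sum, Fintype.piFinset_univ]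
      _ = ∏ i, (if f i = g i then (1:ℝ) else 0) :=
          Finset.prod_congr rfl fun i _ => horth (f i) (g i)
      _ = if f = g then 1 else 0 := by
          by_cases h : f = g
          · subst h; simp
          · rw [if_neg h]
            obtain ⟨i, hi⟩ := Function.ne_iff.mp h
            exact Finset.prod_eq_zero (Finset.mem_univ i) (by simp [hi])
  -- linear independence of the w's
  have hli : LinearIndependent ℝ w := by
    rw [linearIndependent_iff']
    intro s g hg f hf
    have h0 : ∑ x, (∑ f' ∈ s, g f' • w f') x * w f x = 0 := by
      rw [hg]; simp
    have h1 : ∑ x, (∑ f' ∈ s, g f' • w f') x * w f x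
        = ∑ f' ∈ s, g f' * (∑ x, w f' x * w f x) := by
      simp only [Finset.sum_apply, Pi.smul_apply, smul_eq_mul, Finset.sum_mul]
      rw [Finset.sum_comm]
      refine Finset.sum_congr rfl fun f' _ => ?_
      rw [Finset.mul_sum]
      refine Finset.sum_congr rfl fun x _ => ?_
      ring
    rw [h1] at h0
    have h2 : ∑ f' ∈ s, g f' * (∑ x, w f' x * w f x) = g f := by
      rw [Finset.sum_eq_single f]
      · rw [hworth]; simp
      · intro b _ hb; rw [hworth]; simp [hb]
      · intro h; exact absurd hf h
    rw [h2] at h0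
    exact h0
  -- w forms a basis
  have hcard : Fintype.card (Fin j → Fin M)
      = Module.finrank ℝ ((Fin j → Fin M) → ℝ) := by
    rw [Module.finrank_fintype_fun_eq_card]
  let b : Module.Basis (Fin j → Fin M) ℝ ((Fin j → Fin M) → ℝ) :=
    basisOfLinearIndependentOfCardEqFinrank hli hcard
  have hb : ⇑b = w := coe_basisOfLinearIndependentOfCardEqFinrank hli hcard
  -- expand u in the basis and match coefficients
  set r : (Fin j → Fin M) → ℝ := fun f => b.repr u f with hr
  have hrepr : ∑ f, r f • w f = u := by
    have := b.sum_repr u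
    rw [hb] at this
    exact this
  have hkey : ∀ f, (∏ i, e (f i)) * r f = μ' * r f := by
    have lhs : (kronPow A j).mulVec u = ∑ f, ((∏ i, e (f i)) * r f) • w f := by
      conv_lhs => rw [← hrepr]
      rw [← Matrix.mulVecLin_apply, map_sum]
      refine Finset.sum_congr rfl fun f _ => ?_
      rw [_root_.map_smul, Matrix.mulVecLin_apply, hwe f, smul_smul, mul_comm]
    have rhs : μ' • u = ∑ f, (μ' * r f) • w f := by
      rw [← hrepr, Finset.smul_sum]
      refine Finset.sum_congr rfl fun f _ => ?_
      rw [smul_smul]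
    have heq2 : ∑ f, (((∏ i, e (f i)) * r f) - μ' * r f) • b f = 0 := by
      simp only [sub_smul, Finset.sum_sub_distrib, hb]
      rw [← lhs, ← rhs, hμ']
      simp
    have h3 := Fintype.linearIndependent_iff.mp b.linearIndependent _ heq2
    intro f
    have := h3 f
    linarith [this]
  -- find a nonzero coefficient
  have hrne : ∃ f, r f ≠ 0 := by
    by_contra h
    push_neg at h
    apply hu
    rw [← hrepr]
    simp [h]
  obtain ⟨f₀, hf₀⟩ := hrne
  have hμeq : μ' = ∏ i, e (f₀ i) := (mul_right_cancel₀ hf₀ (hkey f₀)).symm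
  -- eigenvector facts for the original matrix
  have hvne : ∀ k, v k ≠ 0 := by
    intro k hk
    have := horth k k
    simp [hk] at this
  have hbound : ∀ k, |e k| ≤ lam₁ := by
    intro k
    by_cases hek : e k = lam₁
    · rw [hek, abs_of_pos hpos]
    · exact le_of_lt (lt_of_le_of_lt (hgap (e k) (v k) (hvne k) (hAv k) hek) hc)
  -- not all eigenvalues along f₀ equal lam₁
  have hex : ∃ i : Fin j, e (f₀ i) ≠ lam₁ := by
    by_contra h
    push_neg at h
    apply hne
    rw [hμeq]
    simp [h]
  obtain ⟨i₀, hi₀⟩ := hex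
  have hci₀ : |e (f₀ i₀)| ≤ c := hgap _ (v (f₀ i₀)) (hvne _) (hAv _) hi₀
  -- final estimate
  rw [hμeq, Finset.abs_prod]
  have hsplit : ∏ i, |e (f₀ i)|
      = |e (f₀ i₀)| * ∏ i ∈ Finset.univ \ {i₀}, |e (f₀ i)| :=
    Finset.prod_eq_mul_prod_sdiff_singleton_of_mem (Finset.mem_univ i₀) _
  rw [hsplit]
  have h1 : ∏ i ∈ Finset.univ \ {i₀}, |e (f₀ i)| ≤ lam₁ ^ (j - 1) := by
    have hcard' : (Finset.univ \ {i₀} : Finset (Fin j)).card = j - 1 := by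
      rw [Finset.card_sdiff_of_subset (by simp)]
      simp
    calc ∏ i ∈ Finset.univ \ {i₀}, |e (f₀ i)|
        ≤ ∏ _i ∈ Finset.univ \ {i₀}, lam₁ :=
          Finset.prod_le_prod (fun i _ => abs_nonneg _) (fun i _ => hbound _)
      _ = lam₁ ^ (j - 1) := by rw [Finset.prod_const, hcard']
  calc |e (f₀ i₀)| * ∏ i ∈ Finset.univ \ {i₀}, |e (f₀ i)|
      ≤ c * ∏ i ∈ Finset.univ \ {i₀}, |e (f₀ i)| :=
        mul_le_mul_of_nonneg_right hci₀ (Finset.prod_nonneg fun i _ => abs_nonneg _)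
    _ ≤ c * lam₁ ^ (j - 1) := mul_le_mul_of_nonneg_left h1 hc0
end

section
/- Let G be a connected, bipartite (2-colorable), d-regular simple graph on M vertices with d > 0, and let A be its adjacency matrix. Then for every integer j ≥ 1, the eigenspace of the j-th Kronecker power A^{⊗j} (viewed as a linear endomorphism of the space of real vectors indexed by Fin j → Fin M) for the eigenvalue d^j has dimension 2^{j-1}. -/
open Matrix Finset

lemma aux_finrank_eigenspace_eq_card {ν : Type*} [Fintype ν] [DecidableEq ν]
    {V : Type*} [AddCommGroup V] [Module ℝ V] [FiniteDimensional ℝ V]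
    (T : Module.End ℝ V) (b : Module.Basis ν ℝ V) (f : ν → ℝ)
    (hb : ∀ i, T (b i) = f i • b i) (μ : ℝ) :
    Module.finrank ℝ (T.eigenspace μ) = (Finset.univ.filter (fun i => f i = μ)).card := by
  classical
  have hmem : ∀ i, b i ∈ T.eigenspace (f i) := fun i => Module.End.mem_eigenspace_iff.2 (hb i)
  -- lower bound
  have hlow : ∀ μ' : ℝ, (Finset.univ.filter (fun i => f i = μ')).card
      ≤ Module.finrank ℝ (T.eigenspace μ') := by
    intro μ'
    set s := Finset.univ.filter (fun i => f i = μ') with hs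
    have hli : LinearIndependent ℝ (fun i : s => b i) :=
      b.linearIndependent.comp Subtype.val Subtype.val_injective
    have hspan : Submodule.span ℝ (Set.range (fun i : s => b i)) ≤ T.eigenspace μ' := by
      rw [Submodule.span_le]
      rintro _ ⟨⟨i, hi⟩, rfl⟩
      have : f i = μ' := (Finset.mem_filter.1 hi).2
      simpa [this] using hmem i
    calc s.card = Fintype.card s := (Fintype.card_coe s).symm
      _ = Module.finrank ℝ (Submodule.span ℝ (Set.range (fun i : s => b i))) :=
          (finrank_span_eq_card hli).symm
      _ ≤ Module.finrank ℝ (T.eigenspace μ') := Submodule.finrank_mono hspan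
  set S : Finset ℝ := Finset.univ.image f with hS
  by_cases hμS : μ ∈ S
  · -- sum of finranks over S equals dim V
    set p : {x // x ∈ S} → Submodule ℝ V := fun ν' => T.eigenspace ν'.val with hp
    have hind : iSupIndep p := T.eigenspaces_iSupIndep.comp Subtype.val_injective
    have hsup : iSup p = ⊤ := by
      rw [eq_top_iff, ← b.span_eq, Submodule.span_le]
      rintro _ ⟨i, rfl⟩
      exact Submodule.mem_iSup_of_mem ⟨f i, Finset.mem_image_of_mem f (Finset.mem_univ i)⟩
        (hmem i)
    have hint : DirectSum.IsInternal p :=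
      DirectSum.isInternal_submodule_of_iSupIndep_of_iSup_eq_top hind hsup
    have B := hint.collectedBasis (fun μ' => Module.finBasis ℝ (p μ'))
    have hdim1 : Module.finrank ℝ V = ∑ μ' : {x // x ∈ S}, Module.finrank ℝ (p μ') := by
      rw [Module.finrank_eq_card_basis B, Fintype.card_sigma]
      simp
    have hdim2 : Module.finrank ℝ V
        = ∑ μ' ∈ S, (Finset.univ.filter (fun i => f i = μ')).card := by
      rw [Module.finrank_eq_card_basis b, ← Finset.card_univ]
      exact Finset.card_eq_sum_card_fiberwise (fun i _ => Finset.mem_image_of_mem f (Finset.mem_univ i))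
    have hsum : ∑ μ' ∈ S, Module.finrank ℝ (T.eigenspace μ')
        = ∑ μ' ∈ S, (Finset.univ.filter (fun i => f i = μ')).card := by
      rw [← hdim2, ← Finset.sum_coe_sort S (fun μ' => Module.finrank ℝ (T.eigenspace μ')), hdim1]
    exact ((Finset.sum_eq_sum_iff_of_le (fun i hi => hlow i)).1 hsum.symm μ hμS).symm
  · have hcard : (Finset.univ.filter (fun i => f i = μ)).card = 0 := by
      rw [Finset.card_eq_zero, Finset.filter_eq_empty_iff]
      intro i _
      exact fun h => hμS (h ▸ Finset.mem_image_of_mem f (Finset.mem_univ i))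
    rw [hcard]
    have hbot : T.eigenspace μ = ⊥ := by
      refine (T.eigenspaces_iSupIndep μ).eq_bot_of_le ?_
      have h1 : (⊤ : Submodule ℝ V) ≤ ⨆ ν' ≠ μ, T.eigenspace ν' := by
        rw [← b.span_eq, Submodule.span_le]
        rintro _ ⟨i, rfl⟩
        have hne : f i ≠ μ := fun h => hμS (h ▸ Finset.mem_image_of_mem f (Finset.mem_univ i))
        exact Submodule.mem_iSup_of_mem (f i) (Submodule.mem_iSup_of_mem hne (hmem i))
      exact le_trans le_top h1
    rw [hbot, finrank_bot]



lemma kronPow_mul {M : ℕ} (A B : Matrix (Fin M) (Fin M) ℝ) (j : ℕ) :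
    kronPow (A * B) j = kronPow A j * kronPow B j := by
  ext x z
  simp only [kronPow, Matrix.mul_apply, Matrix.of_apply]
  rw [Finset.prod_univ_sum]
  rw [← Fintype.piFinset_univ]
  exact Finset.sum_congr rfl fun y _ => Finset.prod_mul_distrib

lemma kronPow_one {M : ℕ} (j : ℕ) :
    kronPow (1 : Matrix (Fin M) (Fin M) ℝ) j = 1 := by
  ext x y
  by_cases h : x = y
  · subst h
    simp [kronPow, Matrix.one_apply]
  · obtain ⟨i, hi⟩ := Function.ne_iff.1 h
    rw [Matrix.one_apply_ne h]
    exact Finset.prod_eq_zero (Finset.mem_univ i) (Matrix.one_apply_ne hi)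

lemma kronPow_mulVec {M j : ℕ} (A : Matrix (Fin M) (Fin M) ℝ) (v : Fin M → Fin M → ℝ)
    (lam : Fin M → ℝ) (hv : ∀ k, A *ᵥ v k = lam k • v k) (x : Fin j → Fin M) :
    kronPow A j *ᵥ (fun t => ∏ i, v (x i) (t i)) =
      (∏ i, lam (x i)) • (fun t => ∏ i, v (x i) (t i)) := by
  funext t
  have h1 : ∀ i, ∑ k, A (t i) k * v (x i) k = lam (x i) * v (x i) (t i) := by
    intro i
    have := congrFun (hv (x i)) (t i)
    simpa [Matrix.mulVec, dotProduct] using this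
  calc (kronPow A j *ᵥ fun t => ∏ i, v (x i) (t i)) t
      = ∑ y : Fin j → Fin M, ∏ i, (A (t i) (y i) * v (x i) (y i)) := by
        simp only [Matrix.mulVec, dotProduct, kronPow, Matrix.of_apply]
        exact Finset.sum_congr rfl fun y _ => (Finset.prod_mul_distrib).symm
    _ = ∏ i, ∑ k, A (t i) k * v (x i) k := by
        rw [Finset.prod_univ_sum, Fintype.piFinset_univ]
    _ = ∏ i, (lam (x i) * v (x i) (t i)) := Finset.prod_congr rfl fun i _ => h1 i
    _ = (∏ i, lam (x i)) * ∏ i, v (x i) (t i) := Finset.prod_mul_distrib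
    _ = ((∏ i, lam (x i)) • fun t => ∏ i, v (x i) (t i)) t := rfl

lemma exists_kron_basis {M j : ℕ} (b : Module.Basis (Fin M) ℝ (Fin M → ℝ)) :
    ∃ B : Module.Basis (Fin j → Fin M) ℝ ((Fin j → Fin M) → ℝ),
      ∀ x, B x = fun t => ∏ i, b (x i) (t i) := by
  classical
  set P := (Pi.basisFun ℝ (Fin M)).toMatrix ⇑b with hPdef
  have hPab : ∀ a k, P a k = b k a := by
    intro a k
    rw [hPdef, Module.Basis.toMatrix_apply, Pi.basisFun_repr]
  have hP : Invertible P := (Pi.basisFun ℝ (Fin M)).invertibleToMatrix b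
  have hK : Invertible (kronPow P j) :=
    ⟨kronPow (⅟P) j, by rw [← kronPow_mul, invOf_mul_self, kronPow_one],
      by rw [← kronPow_mul, mul_invOf_self, kronPow_one]⟩
  refine ⟨(Pi.basisFun ℝ (Fin j → Fin M)).map ((kronPow P j).toLinearEquiv' hK), fun x => ?_⟩
  funext t
  rw [Module.Basis.map_apply, Pi.basisFun_apply]
  show (Matrix.toLin' (kronPow P j)) (Pi.single x 1) t = _
  rw [Matrix.toLin'_apply, Matrix.mulVec_single_one, Matrix.col_apply]
  simp only [mul_one, kronPow, Matrix.of_apply]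
  exact Finset.prod_congr rfl fun i _ => hPab (t i) (x i)

variable {M d : ℕ} (G : SimpleGraph (Fin M)) [DecidableRel G.Adj]

lemma aux_card_nbr (hreg : G.IsRegularOfDegree d) (x : Fin M) :
    (G.neighborFinset x).card = d := hreg x

lemma aux_step (hreg : G.IsRegularOfDegree d) {v : Fin M → ℝ}
    (hv : G.adjMatrix ℝ *ᵥ v = (d : ℝ) • v) {m : ℝ} (hm : ∀ x, v x ≤ m)
    {x y : Fin M} (hx : v x = m) (hxy : G.Adj x y) : v y = m := by
  have h := congrFun hv x
  rw [SimpleGraph.adjMatrix_mulVec_apply] at h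
  have h2 : ∑ u ∈ G.neighborFinset x, v u = (d : ℝ) * m := by
    rw [h, Pi.smul_apply, hx, smul_eq_mul]
  have hsum : ∑ b ∈ G.neighborFinset x, (m - v b) = 0 := by
    rw [Finset.sum_sub_distrib, Finset.sum_const, h2, aux_card_nbr G hreg x, nsmul_eq_mul]
    ring
  have hzero := (Finset.sum_eq_zero_iff_of_nonneg
    (fun b _ => sub_nonneg.2 (hm b))).1 hsum
  have hy := hzero y ((G.mem_neighborFinset x y).mpr hxy)
  linarith

lemma aux_eigen_d (hconn : G.Connected) (hreg : G.IsRegularOfDegree d) :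
    Module.finrank ℝ
      (Module.End.eigenspace (Matrix.toLin' (G.adjMatrix ℝ)) (d : ℝ)) = 1 := by
  classical
  have hne : Nonempty (Fin M) := hconn.nonempty
  have hones : G.adjMatrix ℝ *ᵥ (fun _ => (1:ℝ)) = (d:ℝ) • (fun _ => (1:ℝ)) := by
    funext x
    rw [SimpleGraph.adjMatrix_mulVec_apply]
    simp [aux_card_nbr G hreg x]
  have hones_ne : (fun _ : Fin M => (1:ℝ)) ≠ 0 := by
    intro h
    exact one_ne_zero (congrFun h hne.some)
  have heq : Module.End.eigenspace (Matrix.toLin' (G.adjMatrix ℝ)) (d : ℝ)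
      = Submodule.span ℝ {(fun _ : Fin M => (1:ℝ))} := by
    apply le_antisymm
    · intro v hv
      rw [Module.End.mem_eigenspace_iff, Matrix.toLin'_apply] at hv
      obtain ⟨x₀, -, hmax⟩ := Finset.exists_max_image Finset.univ v ⟨hne.some, Finset.mem_univ _⟩
      have key : ∀ (a b : Fin M) (w : G.Walk a b), v a = v x₀ → v b = v x₀ := by
        intro a b w
        induction w with
        | nil => exact id
        | cons hac p ih =>
            intro ha
            exact ih (aux_step G hreg hv (fun z => hmax z (Finset.mem_univ z)) ha hac)
      have hconst : ∀ x, v x = v x₀ := fun x => key x₀ x (hconn x₀ x).some rfl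
      rw [Submodule.mem_span_singleton]
      exact ⟨v x₀, by funext x; simp [(hconst x)]⟩
    · rw [Submodule.span_le, Set.singleton_subset_iff]
      exact Module.End.mem_eigenspace_iff.2 (by rw [Matrix.toLin'_apply]; exact hones)
  rw [heq]
  exact finrank_span_singleton hones_ne

lemma aux_eig_bound (hreg : G.IsRegularOfDegree d) {v : Fin M → ℝ} {μ : ℝ}
    (hv0 : v ≠ 0) (hv : G.adjMatrix ℝ *ᵥ v = μ • v) : |μ| ≤ (d : ℝ) := by
  obtain ⟨x₁, hx₁⟩ := Function.ne_iff.1 hv0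
  obtain ⟨x₀, -, hmax⟩ := Finset.exists_max_image Finset.univ (fun x => |v x|)
    ⟨x₁, Finset.mem_univ _⟩
  have h0 : 0 < |v x₀| := lt_of_lt_of_le (abs_pos.2 hx₁) (hmax x₁ (Finset.mem_univ _))
  have h := congrFun hv x₀
  rw [SimpleGraph.adjMatrix_mulVec_apply] at h
  have hle : |μ| * |v x₀| ≤ (d : ℝ) * |v x₀| := by
    calc |μ| * |v x₀| = |μ * v x₀| := (abs_mul μ (v x₀)).symm
      _ = |∑ u ∈ G.neighborFinset x₀, v u| := by rw [h]; simp
      _ ≤ ∑ u ∈ G.neighborFinset x₀, |v u| := Finset.abs_sum_le_sum_abs _ _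
      _ ≤ ∑ _u ∈ G.neighborFinset x₀, |v x₀| :=
          Finset.sum_le_sum (fun u _ => hmax u (Finset.mem_univ _))
      _ = (d : ℝ) * |v x₀| := by rw [Finset.sum_const, aux_card_nbr G hreg x₀, nsmul_eq_mul]
  exact le_of_mul_le_mul_right hle h0

lemma aux_eigen_neg_d (hconn : G.Connected) (hbip : G.Colorable 2)
    (hreg : G.IsRegularOfDegree d) :
    Module.finrank ℝ
      (Module.End.eigenspace (Matrix.toLin' (G.adjMatrix ℝ)) (-(d : ℝ))) = 1 := by
  classical
  obtain ⟨C⟩ := hbip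
  set s : Fin M → ℝ := fun x => if C x = 0 then 1 else -1 with hs
  have hs2 : ∀ x, s x * s x = 1 := by
    intro x; by_cases h : C x = 0 <;> simp [hs, h]
  have h01 : ∀ a b : Fin 2, a ≠ b → a ≠ 0 → b = 0 := by decide
  have hsadj : ∀ {x y}, G.Adj x y → s y = -s x := by
    intro x y hxy
    have hne : C x ≠ C y := C.valid hxy
    by_cases hx0 : C x = 0
    · have : C y ≠ 0 := fun h => hne (hx0.trans h.symm)
      simp [hs, hx0, this]
    · have : C y = 0 := h01 _ _ hne hx0
      simp [hs, hx0, this]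
  set Fl : (Fin M → ℝ) →ₗ[ℝ] (Fin M → ℝ) :=
    { toFun := fun v x => s x * v x,
      map_add' := by intro u v; funext x; simp [mul_add],
      map_smul' := by intro c v; funext x; simp; ring } with hFl
  have hFlFl : ∀ v, Fl (Fl v) = v := by
    intro v; funext x; simp [hFl, ← mul_assoc, hs2 x]
  set F : (Fin M → ℝ) ≃ₗ[ℝ] (Fin M → ℝ) :=
    LinearEquiv.ofLinear Fl Fl (LinearMap.ext hFlFl) (LinearMap.ext hFlFl) with hF
  have hAF : ∀ v, G.adjMatrix ℝ *ᵥ (Fl v) = -(Fl (G.adjMatrix ℝ *ᵥ v)) := by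
    intro v
    funext x
    rw [SimpleGraph.adjMatrix_mulVec_apply]
    have : ∀ u ∈ G.neighborFinset x, Fl v u = -s x * v u := by
      intro u hu
      have := hsadj ((G.mem_neighborFinset x u).mp hu)
      simp [hFl, this]
    rw [Finset.sum_congr rfl this, ← Finset.mul_sum]
    simp [hFl, SimpleGraph.adjMatrix_mulVec_apply]
  have hmap : Submodule.map (F : (Fin M → ℝ) →ₗ[ℝ] (Fin M → ℝ))
      (Module.End.eigenspace (Matrix.toLin' (G.adjMatrix ℝ)) (-(d : ℝ)))
      = Module.End.eigenspace (Matrix.toLin' (G.adjMatrix ℝ)) (d : ℝ) := by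
    apply le_antisymm
    · rintro _ ⟨v, hv, rfl⟩
      simp only [SetLike.mem_coe] at hv
      rw [Module.End.mem_eigenspace_iff, Matrix.toLin'_apply] at hv
      rw [Module.End.mem_eigenspace_iff, Matrix.toLin'_apply]
      show G.adjMatrix ℝ *ᵥ Fl v = (d : ℝ) • Fl v
      rw [hAF, hv, Fl.map_smul]
      funext x
      simp
    · intro w hw
      rw [Module.End.mem_eigenspace_iff, Matrix.toLin'_apply] at hw
      refine ⟨Fl w, ?_, hFlFl w⟩
      show Fl w ∈ Module.End.eigenspace (Matrix.toLin' (G.adjMatrix ℝ)) (-(d : ℝ))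
      rw [Module.End.mem_eigenspace_iff, Matrix.toLin'_apply]
      rw [hAF, hw, Fl.map_smul]
      funext x
      simp
  rw [← aux_eigen_d G hconn hreg, ← hmap]
  exact (LinearEquiv.finrank_map_eq F _).symm

lemma aux_bool_count {j : ℕ} (hj : 1 ≤ j) :
    (univ.filter (fun g : Fin j → Bool => Even (univ.filter (fun i => g i)).card)).card
      = 2 ^ (j - 1) := by
  classical
  set i0 : Fin j := ⟨0, hj⟩ with hi0
  set N : (Fin j → Bool) → ℕ := fun g => (univ.filter (fun i => g i)).card with hN
  have hNsum : ∀ g : Fin j → Bool, N g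
      = (if g i0 then 1 else 0) + ∑ x ∈ univ.erase i0, (if g x then 1 else 0) := by
    intro g
    rw [hN]
    simp only
    rw [Finset.card_filter]
    exact (Finset.add_sum_erase univ _ (Finset.mem_univ i0)).symm
  set φ : (Fin j → Bool) → (Fin j → Bool) := fun g => Function.update g i0 (!g i0) with hφ
  have hφφ : ∀ g, φ (φ g) = g := by
    intro g
    simp only [hφ, Function.update_self, Bool.not_not]
    rw [Function.update_idem, Function.update_eq_self]
  have herase : ∀ g, ∑ x ∈ univ.erase i0, (if (φ g) x then (1:ℕ) else 0)
      = ∑ x ∈ univ.erase i0, (if g x then 1 else 0) := by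
    intro g
    refine Finset.sum_congr rfl fun x hx => ?_
    rw [hφ]
    simp only [Function.update_of_ne (Finset.ne_of_mem_erase hx)]
  have hpar : ∀ g, Even (N (φ g)) ↔ ¬ Even (N g) := by
    intro g
    rw [hNsum, hNsum, herase]
    have hfgi0 : φ g i0 = !g i0 := by simp [hφ]
    rw [hfgi0]
    cases hgi : g i0 <;> simp [Nat.even_add_one, Nat.even_add]
  have hcard_eq : (univ.filter (fun g : Fin j → Bool => Even (N g))).card
      = (univ.filter (fun g : Fin j → Bool => ¬ Even (N g))).card := by
    refine Finset.card_bij' (fun g _ => φ g) (fun g _ => φ g) ?_ ?_ ?_ ?_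
    · intro g hg
      rw [Finset.mem_filter] at hg ⊢
      exact ⟨Finset.mem_univ _, fun h => (hpar g).1 h hg.2⟩
    · intro g hg
      rw [Finset.mem_filter] at hg ⊢
      exact ⟨Finset.mem_univ _, (hpar g).2 hg.2⟩
    · intro g _; exact hφφ g
    · intro g _; exact hφφ g
  have htotal : (univ.filter (fun g : Fin j → Bool => Even (N g))).card
      + (univ.filter (fun g : Fin j → Bool => ¬ Even (N g))).card = 2 ^ j := by
    rw [Finset.card_filter_add_card_filter_not]
    simp [Finset.card_univ]
  have h2 : 2 * (univ.filter (fun g : Fin j → Bool => Even (N g))).card = 2 ^ j := by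
    omega
  have hj' : 2 ^ j = 2 * 2 ^ (j - 1) := by
    rw [← pow_succ']
    congr 1
    omega
  have hfin : (univ.filter (fun g : Fin j → Bool => Even (N g))).card = 2 ^ (j - 1) := by
    omega
  exact hfin

lemma aux_count {j : ℕ} (hj : 1 ≤ j) {K : Type*} [Fintype K] [DecidableEq K]
    (lam : K → ℝ) (dd : ℝ) (hdd : 0 < dd)
    (hbound : ∀ k, |lam k| ≤ dd)
    (hpos : (univ.filter (fun k => lam k = dd)).card = 1)
    (hneg : (univ.filter (fun k => lam k = -dd)).card = 1) :
    (univ.filter (fun x : Fin j → K => ∏ i, lam (x i) = dd ^ j)).card = 2 ^ (j - 1) := by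
  classical
  obtain ⟨kp, hkp⟩ := Finset.card_eq_one.1 hpos
  obtain ⟨kn, hkn⟩ := Finset.card_eq_one.1 hneg
  have hkp_val : lam kp = dd := by
    have : kp ∈ univ.filter (fun k => lam k = dd) := hkp ▸ Finset.mem_singleton_self kp
    exact (Finset.mem_filter.1 this).2
  have hkn_val : lam kn = -dd := by
    have : kn ∈ univ.filter (fun k => lam k = -dd) := hkn ▸ Finset.mem_singleton_self kn
    exact (Finset.mem_filter.1 this).2
  have hkp_uniq : ∀ k, lam k = dd → k = kp := by
    intro k hk
    have : k ∈ univ.filter (fun k => lam k = dd) := Finset.mem_filter.2 ⟨Finset.mem_univ _, hk⟩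
    rw [hkp, Finset.mem_singleton] at this; exact this
  have hkn_uniq : ∀ k, lam k = -dd → k = kn := by
    intro k hk
    have : k ∈ univ.filter (fun k => lam k = -dd) := Finset.mem_filter.2 ⟨Finset.mem_univ _, hk⟩
    rw [hkn, Finset.mem_singleton] at this; exact this
  have hkne : kp ≠ kn := by
    intro h
    rw [h, hkn_val] at hkp_val
    linarith
  have hddj : (0:ℝ) < dd ^ j := pow_pos hdd j
  -- all coordinates are kp or kn
  have hall_of : ∀ x : Fin j → K, ∏ i, lam (x i) = dd ^ j → ∀ i, x i = kp ∨ x i = kn := by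
    intro x hx
    by_contra hcon
    push_neg at hcon
    obtain ⟨i₀, hi₀p, hi₀n⟩ := hcon
    have hlt : |lam (x i₀)| < dd := by
      rcases lt_or_eq_of_le (hbound (x i₀)) with h | h
      · exact h
      · rcases abs_eq (le_of_lt hdd) |>.1 h with h' | h'
        · exact absurd (hkp_uniq _ h') hi₀p
        · exact absurd (hkn_uniq _ h') hi₀n
    have habs : |∏ i, lam (x i)| = dd ^ j := by rw [hx]; exact abs_of_pos hddj
    rw [Finset.abs_prod] at habs
    have hsplit : ∏ i, |lam (x i)| = |lam (x i₀)| * ∏ i ∈ univ.erase i₀, |lam (x i)| :=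
      (Finset.mul_prod_erase univ _ (Finset.mem_univ i₀)).symm
    have hrest : ∏ i ∈ univ.erase i₀, |lam (x i)| ≤ dd ^ (j - 1) := by
      calc ∏ i ∈ univ.erase i₀, |lam (x i)| ≤ ∏ _i ∈ univ.erase i₀, dd :=
            Finset.prod_le_prod (fun i _ => abs_nonneg _) (fun i _ => hbound (x i))
        _ = dd ^ (j - 1) := by
            rw [Finset.prod_const, Finset.card_erase_of_mem (Finset.mem_univ i₀)]
            simp [Finset.card_univ]
    have hlt2 : ∏ i, |lam (x i)| < dd ^ j := by
      rw [hsplit]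
      calc |lam (x i₀)| * ∏ i ∈ univ.erase i₀, |lam (x i)|
          ≤ |lam (x i₀)| * dd ^ (j - 1) :=
            mul_le_mul_of_nonneg_left hrest (abs_nonneg _)
        _ < dd * dd ^ (j - 1) := by
            apply mul_lt_mul_of_pos_right hlt (pow_pos hdd _)
        _ = dd ^ j := by
            rw [← pow_succ']
            congr 1
            omega
    rw [habs] at hlt2
    exact lt_irrefl _ hlt2
  -- product formula when all coordinates are kp or kn
  have hprod_eq : ∀ x : Fin j → K, (∀ i, x i = kp ∨ x i = kn) →
      ∏ i, lam (x i) = (-1) ^ (univ.filter (fun i => x i = kn)).card * dd ^ j := by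
    intro x hall
    have h1 : ∀ i : Fin j, lam (x i) = (if x i = kn then (-1:ℝ) else 1) * dd := by
      intro i
      rcases hall i with h | h
      · rw [h, hkp_val, if_neg hkne]
        ring
      · rw [h, hkn_val, if_pos rfl]
        ring
    calc ∏ i, lam (x i) = ∏ i, ((if x i = kn then (-1:ℝ) else 1) * dd) :=
          Finset.prod_congr rfl fun i _ => h1 i
      _ = (∏ i, (if x i = kn then (-1:ℝ) else 1)) * dd ^ j := by
          rw [Finset.prod_mul_distrib, Finset.prod_const, Finset.card_univ, Fintype.card_fin]
      _ = (-1) ^ (univ.filter (fun i => x i = kn)).card * dd ^ j := by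
          congr 1
          rw [Finset.prod_ite, Finset.prod_const, Finset.prod_const, one_pow, mul_one]
  have hchar : ∀ x : Fin j → K, (∏ i, lam (x i) = dd ^ j)
      ↔ ((∀ i, x i = kp ∨ x i = kn) ∧ Even (univ.filter (fun i => x i = kn)).card) := by
    intro x
    constructor
    · intro hx
      have hall := hall_of x hx
      refine ⟨hall, ?_⟩
      rw [hprod_eq x hall] at hx
      have : (-1:ℝ) ^ (univ.filter (fun i => x i = kn)).card = 1 :=
        mul_right_cancel₀ (ne_of_gt hddj) (hx.trans (one_mul (dd ^ j)).symm)
      exact (neg_one_pow_eq_one_iff_even (by norm_num : (-1:ℝ) ≠ 1)).1 this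
    · rintro ⟨hall, heven⟩
      rw [hprod_eq x hall, Even.neg_one_pow heven, one_mul]
  -- bijection with boolean vectors
  rw [← aux_bool_count hj]
  refine Finset.card_bij' (fun x _ => fun i => decide (x i = kn))
    (fun g _ => fun i => if g i then kn else kp) ?_ ?_ ?_ ?_
  · intro x hx
    rw [Finset.mem_filter] at hx ⊢
    obtain ⟨-, hx⟩ := hx
    rw [hchar] at hx
    refine ⟨Finset.mem_univ _, ?_⟩
    have : (univ.filter (fun i => decide (x i = kn) = true)) = univ.filter (fun i => x i = kn) := by
      apply Finset.filter_congr
      intro i _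
      simp
    rw [this]
    exact hx.2
  · intro g hg
    rw [Finset.mem_filter] at hg ⊢
    refine ⟨Finset.mem_univ _, ?_⟩
    rw [hchar]
    constructor
    · intro i
      by_cases h : g i <;> simp [h]
    · have : (univ.filter (fun i => (if g i then kn else kp) = kn)) = univ.filter (fun i => g i) := by
        apply Finset.filter_congr
        intro i _
        by_cases h : g i <;> simp [h, hkne, Ne.symm hkne]
      rw [this]
      exact hg.2
  · intro x hx
    rw [Finset.mem_filter, hchar] at hx
    funext i
    rcases hx.2.1 i with h | h <;> simp [h, hkne, Ne.symm hkne]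
  · intro g hg
    funext i
    by_cases h : g i <;> simp [h, hkne, Ne.symm hkne]

/-- For a connected, regular, bipartite initiator of degree `d`, the eigenspace of the
`j`-th Kronecker power of its adjacency matrix for the eigenvalue `d^j` has
dimension `2^{j-1}`. -/
theorem kronPow_bipartite_principal_eigenspace_dim
    {M d : ℕ} (G : SimpleGraph (Fin M)) [DecidableRel G.Adj]
    (hconn : G.Connected) (hbip : G.Colorable 2)
    (hreg : G.IsRegularOfDegree d) (hd : 0 < d) (j : ℕ) (hj : 1 ≤ j) :
    Module.finrank ℝ
      (Module.End.eigenspace (Matrix.toLin' (kronPow (G.adjMatrix ℝ) j)) ((d : ℝ) ^ j))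
      = 2 ^ (j - 1) := by
  classical
  have hA : (G.adjMatrix ℝ).IsHermitian := by
    rw [Matrix.IsHermitian, Matrix.conjTranspose_eq_transpose_of_trivial]
    exact G.isSymm_adjMatrix
  set lam := hA.eigenvalues with hlam
  set b : Module.Basis (Fin M) ℝ (Fin M → ℝ) :=
    (hA.eigenvectorBasis.toBasis).map (WithLp.linearEquiv 2 ℝ (Fin M → ℝ)) with hbdef
  have hb_eq : ∀ k, b k = ⇑(hA.eigenvectorBasis k) := by
    intro k
    rw [hbdef, Module.Basis.map_apply, OrthonormalBasis.coe_toBasis]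
    rfl
  have hmul : ∀ k, G.adjMatrix ℝ *ᵥ b k = lam k • b k := by
    intro k
    rw [hb_eq k]
    exact hA.mulVec_eigenvectorBasis k
  have hb_ne : ∀ k, b k ≠ 0 := fun k => by
    have := b.ne_zero k
    exact this
  -- adjacency-level data
  have hb1 : ∀ k, Matrix.toLin' (G.adjMatrix ℝ) (b k) = lam k • b k := by
    intro k
    rw [Matrix.toLin'_apply]
    exact hmul k
  have hfin1 := aux_finrank_eigenspace_eq_card (Matrix.toLin' (G.adjMatrix ℝ)) b lam hb1
  have hpos : (Finset.univ.filter (fun k => lam k = (d : ℝ))).card = 1 :=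
    (hfin1 (d : ℝ)).symm.trans (aux_eigen_d G hconn hreg)
  have hneg : (Finset.univ.filter (fun k => lam k = -(d : ℝ))).card = 1 :=
    (hfin1 (-(d : ℝ))).symm.trans (aux_eigen_neg_d G hconn hbip hreg)
  have hbound : ∀ k, |lam k| ≤ (d : ℝ) := fun k => aux_eig_bound G hreg (hb_ne k) (hmul k)
  -- tensor basis
  obtain ⟨B, hB⟩ := exists_kron_basis (j := j) b
  have hBeig : ∀ x, Matrix.toLin' (kronPow (G.adjMatrix ℝ) j) (B x)
      = (∏ i, lam (x i)) • B x := by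
    intro x
    rw [Matrix.toLin'_apply, hB x]
    exact kronPow_mulVec (G.adjMatrix ℝ) (fun k => b k) lam hmul x
  rw [aux_finrank_eigenspace_eq_card (Matrix.toLin' (kronPow (G.adjMatrix ℝ) j)) B
    (fun x => ∏ i, lam (x i)) hBeig ((d : ℝ) ^ j)]
  exact aux_count hj lam (d : ℝ) (by exact_mod_cast hd) hbound hpos hneg
end

section
/- Let G be a connected, bipartite (2-colorable), d-regular simple graph on M vertices with d > 0, and let j ≥ 1. Define the j-th tensor power graph G^{×j} on vertex set Fin j → Fin M by declaring x and y adjacent if and only if G.Adj (x(i)) (y(i)) for every i ∈ Fin j. Then G^{×j} has exactly 2^{j-1} connected components, and every connected component contains exactly M^j / 2^{j-1} vertices. -/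
/-- The `j`-th tensor (Kronecker) power of a simple graph `G` on `Fin M`:
vertices are functions `Fin j → Fin M`, and `x ~ y` iff `G.Adj (x i) (y i)` for every
`i`. (The clause `x ≠ y` only rules out loops; for `j ≥ 1` the condition
`∀ i, G.Adj (x i) (y i)` already forces `x ≠ y`, so this is the same graph.) -/
def tensorPow {M : ℕ} (G : SimpleGraph (Fin M)) (j : ℕ) :
    SimpleGraph (Fin j → Fin M) where
  Adj x y := x ≠ y ∧ ∀ i, G.Adj (x i) (y i)
  symm := ⟨fun x y h => ⟨h.1.symm, fun i => (h.2 i).symm⟩⟩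
  loopless := ⟨fun x h => h.1 rfl⟩

namespace TensorPowAux

open SimpleGraph

variable {M : ℕ} {G : SimpleGraph (Fin M)}

lemma walk_parity (c : Fin M → ZMod 2) (hc : ∀ u v, G.Adj u v → c v = c u + 1)
    {u v : Fin M} (w : G.Walk u v) : c v = c u + (w.length : ZMod 2) := by
  induction w with
  | nil => simp
  | cons h p ih =>
    rw [SimpleGraph.Walk.length_cons, ih, hc _ _ h]
    push_cast
    ring

lemma exists_walk_length (hconn : G.Connected)
    (hnbr : ∀ u : Fin M, ∃ w, G.Adj u w) (u v : Fin M) :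
    ∃ L : ℕ, ∀ k : ℕ, ∃ w : G.Walk u v, w.length = L + 2 * k := by
  obtain ⟨w0⟩ := hconn.preconnected u v
  refine ⟨w0.length, fun k => ?_⟩
  induction k with
  | zero => exact ⟨w0, by omega⟩
  | succ k ih =>
    obtain ⟨w, hw⟩ := ih
    obtain ⟨z, hz⟩ := hnbr u
    exact ⟨SimpleGraph.Walk.cons hz (SimpleGraph.Walk.cons hz.symm w), by
      simp [SimpleGraph.Walk.length_cons, hw]; omega⟩

lemma reach_of_walks {n : ℕ} (N : ℕ) :
    ∀ x y : Fin (n + 1) → Fin M,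
      (∀ i, ∃ w : G.Walk (x i) (y i), w.length = N) →
      (tensorPow G (n + 1)).Reachable x y := by
  induction N with
  | zero =>
    intro x y h
    have hxy : x = y := funext fun i => by
      obtain ⟨w, hw⟩ := h i
      exact SimpleGraph.Walk.eq_of_length_eq_zero hw
    exact hxy ▸ SimpleGraph.Reachable.refl x
  | succ N ih =>
    intro x y h
    have h' : ∀ i, ∃ z, G.Adj (x i) z ∧ ∃ w : G.Walk z (y i), w.length = N := by
      intro i
      obtain ⟨w, hw⟩ := h i
      have hnn : ¬ w.Nil := by
        rw [SimpleGraph.Walk.nil_iff_length_eq, hw]; omega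
      obtain ⟨z, hadj, q, rfl⟩ := (SimpleGraph.Walk.not_nil_iff).mp hnn
      exact ⟨z, hadj, q, by simpa using hw⟩
    choose z hz w hw using h'
    have hadj : (tensorPow G (n + 1)).Adj x z := by
      show x ≠ z ∧ ∀ i, G.Adj (x i) (z i)
      refine ⟨fun hxz => ?_, hz⟩
      have := hz 0
      rw [hxz] at this
      exact G.irrefl this
    exact hadj.reachable.trans (ih z y fun i => ⟨w i, hw i⟩)

lemma class_sizes [DecidableRel G.Adj] (c : Fin M → ZMod 2)
    (hc : ∀ u v, G.Adj u v → c v = c u + 1)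
    {d : ℕ} (hreg : G.IsRegularOfDegree d) (hd : 0 < d) :
    Fintype.card {u : Fin M // c u = 0} = Fintype.card {u : Fin M // c u = 1} := by
  classical
  have hdeg : ∀ u : Fin M, Fintype.card {w : Fin M // G.Adj u w} = d := by
    intro u
    rw [← hreg u, ← SimpleGraph.card_neighborSet_eq_degree]
    rfl
  have e0 : {p : Fin M × Fin M // G.Adj p.1 p.2 ∧ c p.1 = 0}
      ≃ Σ u : {u : Fin M // c u = 0}, {w : Fin M // G.Adj u.1 w} :=
    { toFun := fun p => ⟨⟨p.1.1, p.2.2⟩, ⟨p.1.2, p.2.1⟩⟩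
      invFun := fun q => ⟨(q.1.1, q.2.1), q.2.2, q.1.2⟩
      left_inv := fun p => rfl
      right_inv := fun q => rfl }
  have e1 : {p : Fin M × Fin M // G.Adj p.1 p.2 ∧ c p.1 = 1}
      ≃ Σ u : {u : Fin M // c u = 1}, {w : Fin M // G.Adj u.1 w} :=
    { toFun := fun p => ⟨⟨p.1.1, p.2.2⟩, ⟨p.1.2, p.2.1⟩⟩
      invFun := fun q => ⟨(q.1.1, q.2.1), q.2.2, q.1.2⟩
      left_inv := fun p => rfl
      right_inv := fun q => rfl }
  have key : ∀ a : ZMod 2, a = 0 → a + 1 = 1 := by decide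
  have key' : ∀ a : ZMod 2, a = 1 → a + 1 = 0 := by decide
  have eswap : {p : Fin M × Fin M // G.Adj p.1 p.2 ∧ c p.1 = 0}
      ≃ {p : Fin M × Fin M // G.Adj p.1 p.2 ∧ c p.1 = 1} :=
    { toFun := fun p => ⟨p.1.swap, p.2.1.symm, by
        show c p.1.2 = 1
        rw [hc _ _ p.2.1]
        exact key _ p.2.2⟩
      invFun := fun p => ⟨p.1.swap, p.2.1.symm, by
        show c p.1.2 = 0
        rw [hc _ _ p.2.1]
        exact key' _ p.2.2⟩
      left_inv := fun p => rfl
      right_inv := fun p => rfl }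
  have h0 : Fintype.card {p : Fin M × Fin M // G.Adj p.1 p.2 ∧ c p.1 = 0}
      = Fintype.card {u : Fin M // c u = 0} * d := by
    rw [Fintype.card_congr e0, Fintype.card_sigma]
    simp [hdeg, Finset.sum_const, mul_comm]
  have h1 : Fintype.card {p : Fin M × Fin M // G.Adj p.1 p.2 ∧ c p.1 = 1}
      = Fintype.card {u : Fin M // c u = 1} * d := by
    rw [Fintype.card_congr e1, Fintype.card_sigma]
    simp [hdeg, Finset.sum_const, mul_comm]
  have := Fintype.card_congr eswap
  rw [h0, h1] at this
  exact Nat.eq_of_mul_eq_mul_right hd this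

lemma fiber_card (c : Fin M → ZMod 2) {n : ℕ} (v : Fin n → ZMod 2) (m : ℕ)
    (hm : ∀ b : ZMod 2, Fintype.card {u : Fin M // c u = b} = m) :
    Fintype.card {x : Fin (n + 1) → Fin M // ∀ k : Fin n, c (x k.succ) - c (x 0) = v k}
      = M * m ^ n := by
  classical
  have e : {x : Fin (n + 1) → Fin M // ∀ k : Fin n, c (x k.succ) - c (x 0) = v k}
      ≃ (u0 : Fin M) × ((k : Fin n) → {u : Fin M // c u = v k + c u0}) :=
    { toFun := fun x => ⟨x.1 0, fun k => ⟨x.1 k.succ, by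
        have h := x.2 k
        rw [sub_eq_iff_eq_add] at h
        exact h⟩⟩
      invFun := fun q => ⟨Fin.cons q.1 (fun k => (q.2 k).1), fun k => by
        simp only [Fin.cons_succ, Fin.cons_zero, (q.2 k).2]
        ring⟩
      left_inv := fun x => Subtype.ext (funext fun i => by
        refine Fin.cases ?_ (fun k => ?_) i <;> simp)
      right_inv := fun q => by
        refine Sigma.ext rfl ?_
        simp
        exact HEq.rfl }
  rw [Fintype.card_congr e, Fintype.card_sigma]
  have : ∀ u0 : Fin M,
      Fintype.card ((k : Fin n) → {u : Fin M // c u = v k + c u0}) = m ^ n := by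
    intro u0
    rw [Fintype.card_pi]
    simp [hm]
  simp [this]

end TensorPowAux

/-- The `j`-th tensor power of a connected, regular, bipartite graph on `M` vertices has
exactly `2^{j-1}` connected components, each containing exactly `M^j / 2^{j-1}`
vertices. -/
theorem tensorPow_bipartite_components
    {M d : ℕ} (G : SimpleGraph (Fin M)) [DecidableRel G.Adj]
    (hconn : G.Connected) (hbip : G.Colorable 2)
    (hreg : G.IsRegularOfDegree d) (hd : 0 < d) (j : ℕ) (hj : 1 ≤ j) :
    Nat.card (tensorPow G j).ConnectedComponent = 2 ^ (j - 1) ∧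
    ∀ K : (tensorPow G j).ConnectedComponent,
      Nat.card K.supp = M ^ j / 2 ^ (j - 1) := by
  classical
  open TensorPowAux in
  obtain ⟨n, rfl⟩ : ∃ n, j = n + 1 := ⟨j - 1, by omega⟩
  simp only [Nat.add_sub_cancel]
  -- the proper 2-coloring with values in ZMod 2
  obtain ⟨C⟩ := hbip
  set c : Fin M → ZMod 2 := fun u => if C u = 0 then 0 else 1 with hcdef
  have hc : ∀ u v, G.Adj u v → c v = c u + 1 := by
    intro u v h
    have hCne := C.valid h
    have : ∀ a b : Fin 2, a ≠ b →
        (if b = 0 then (0 : ZMod 2) else 1) = (if a = 0 then (0 : ZMod 2) else 1) + 1 := by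
      decide
    exact this _ _ hCne
  have hnbr : ∀ u : Fin M, ∃ w, G.Adj u w := by
    intro u
    have : 0 < G.degree u := by rw [hreg u]; exact hd
    obtain ⟨w, hw⟩ := Finset.card_pos.mp this
    exact ⟨w, (G.mem_neighborFinset u w).mp hw⟩
  -- the invariant
  set ψ : (Fin (n + 1) → Fin M) → (Fin n → ZMod 2) :=
    fun x k => c (x k.succ) - c (x 0) with hψdef
  have hadjψ : ∀ x y, (tensorPow G (n + 1)).Adj x y → ψ x = ψ y := by
    intro x y h
    replace h : x ≠ y ∧ ∀ i, G.Adj (x i) (y i) := h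
    funext k
    have h1 := hc _ _ (h.2 k.succ)
    have h0 := hc _ _ (h.2 0)
    simp only [hψdef, h1, h0]
    ring
  have hwalkψ : ∀ x y, (tensorPow G (n + 1)).Walk x y → ψ x = ψ y := by
    intro x y w
    induction w with
    | nil => rfl
    | cons h p ih => exact (hadjψ _ _ h).trans ih
  have hkey : ∀ x y, (tensorPow G (n + 1)).Reachable x y ↔ ψ x = ψ y := by
    intro x y
    constructor
    · rintro ⟨w⟩; exact hwalkψ _ _ w
    · intro hψ
      have hs : ∀ i, c (y i) - c (x i) = c (y 0) - c (x 0) := by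
        intro i
        refine Fin.cases rfl (fun k => ?_) i
        have h := congrFun hψ k
        simp only [hψdef] at h
        linear_combination -h
      choose L hL using fun i => exists_walk_length hconn hnbr (x i) (y i)
      have hLpar : ∀ i, (L i : ZMod 2) = c (y 0) - c (x 0) := by
        intro i
        obtain ⟨w, hw⟩ := hL i 0
        have := walk_parity c hc w
        rw [hw] at this
        rw [← hs i]
        push_cast at this ⊢
        linear_combination -this
      set N : ℕ := L 0 + 2 * ∑ i, L i with hNdef
      refine reach_of_walks N x y fun i => ?_
      have hle : L i ≤ N := by
        have := Finset.single_le_sum (f := L) (fun i _ => Nat.zero_le _)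
          (Finset.mem_univ i)
        omega
      have hpar : N % 2 = L i % 2 := by
        have h1 : ((L 0 : ℕ) : ZMod 2) = ((L i : ℕ) : ZMod 2) := by
          rw [hLpar 0, hLpar i]
        rw [ZMod.natCast_eq_natCast_iff'] at h1
        omega
      obtain ⟨k, hk⟩ : ∃ k, N = L i + 2 * k := ⟨(N - L i) / 2, by omega⟩
      obtain ⟨w, hw⟩ := hL i k
      exact ⟨w, by omega⟩
  -- the classifying map
  set Φ : (tensorPow G (n + 1)).ConnectedComponent → (Fin n → ZMod 2) :=
    SimpleGraph.ConnectedComponent.lift ψ (fun x y p _ => hwalkψ x y p) with hΦdef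
  have hΦmk : ∀ x, Φ ((tensorPow G (n + 1)).connectedComponentMk x) = ψ x :=
    fun _ => rfl
  have hΦbij : Function.Bijective Φ := by
    constructor
    · refine SimpleGraph.ConnectedComponent.ind₂ (fun x y h => ?_)
      rw [hΦmk, hΦmk] at h
      exact SimpleGraph.ConnectedComponent.sound ((hkey x y).mpr h)
    · intro v
      have : Nonempty (Fin M) := hconn.nonempty
      obtain ⟨u0⟩ := this
      obtain ⟨u1, hu1⟩ := hnbr u0
      have hcol := hc _ _ hu1
      refine ⟨(tensorPow G (n + 1)).connectedComponentMk
        (Fin.cons u0 (fun k => if v k = 0 then u0 else u1)), ?_⟩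
      rw [hΦmk]
      funext k
      have hz : ∀ a : ZMod 2, a ≠ 0 → a = 1 := by decide
      simp only [hψdef, Fin.cons_succ, Fin.cons_zero]
      by_cases hv : v k = 0
      · simp [hv]
      · rw [if_neg hv, hcol, hz _ hv]; ring
  -- class sizes
  set m : ℕ := Fintype.card {u : Fin M // c u = 0} with hmdef
  have hm : ∀ b : ZMod 2, Fintype.card {u : Fin M // c u = b} = m := by
    intro b
    have hb : b = 0 ∨ b = 1 := by revert b; decide
    rcases hb with hb | hb
    · rw [hb]
    · rw [hb, ← class_sizes c hc hreg hd]
  have hM2 : M = 2 * m := by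
    have h01 : ∀ a : ZMod 2, ¬a = 0 ↔ a = 1 := by decide
    have := Finset.card_filter_add_card_filter_not
      (s := (Finset.univ : Finset (Fin M))) (p := fun u => c u = 0)
    rw [Finset.card_univ, Fintype.card_fin] at this
    have e0 : Fintype.card {u : Fin M // c u = 0}
        = (Finset.univ.filter (fun u => c u = 0)).card := Fintype.card_subtype _
    have e1 : Fintype.card {u : Fin M // c u = 1}
        = (Finset.univ.filter (fun u => ¬c u = 0)).card := by
      rw [Fintype.card_subtype]
      congr 1
      exact Finset.filter_congr (fun u _ => by rw [h01])
    have hm1 := hm 1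
    omega
  constructor
  · -- number of components
    have := Nat.card_congr (Equiv.ofBijective Φ hΦbij)
    rw [this, Nat.card_eq_fintype_card]
    simp
  · -- size of each component
    intro K
    refine SimpleGraph.ConnectedComponent.ind (fun x₀ => ?_) K
    have hsupp : ((tensorPow G (n + 1)).connectedComponentMk x₀).supp
        = {y | ψ y = ψ x₀} := by
      ext y
      rw [SimpleGraph.ConnectedComponent.mem_supp_iff, SimpleGraph.ConnectedComponent.eq]
      exact hkey y x₀
    rw [hsupp]
    have hcard : Nat.card {y : Fin (n + 1) → Fin M | ψ y = ψ x₀}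
        = Fintype.card {y : Fin (n + 1) → Fin M // ∀ k : Fin n,
            c (y k.succ) - c (y 0) = ψ x₀ k} := by
      rw [Nat.card_eq_fintype_card]
      refine Fintype.card_congr (Equiv.subtypeEquivRight fun y => ?_)
      simp only [Set.mem_setOf_eq, hψdef]
      exact funext_iff
    rw [hcard, fiber_card c (ψ x₀) m hm, hM2]
    have h2 : (2 * m) ^ (n + 1) = 2 ^ n * (2 * m * m ^ n) := by ring
    rw [h2, Nat.mul_div_cancel_left _ (pow_pos (by norm_num) n)]
end
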